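/- Let a, n ∈ ℤ with a ≥ 1 and n ≥ 2, and let p be a prime with p > a + 1. Then f_{n,a,p}(x) = x^n − a·x^{n−1} − p is a strictly-Perron polynomial: it is irreducible over ℚ and has a real root λ > 1 such that every complex root α ≠ λ satisfies |α| < λ, some complex root α ≠ λ satisfies |α| ≥ 1, λ^{-1} is not a root of f_{n,a,p}, and it is not the case that exactly one complex root of f_{n,a,p} has modulus < 1 while some root other than λ has modulus > 1. -/

import Mathlib

open Polynomial

/-- The polynomial `f_{n,a,p}(x) = x^n - a*x^(n-1) - p` in `ℤ[x]`. -/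
noncomputable def fnap (n : ℕ) (a p : ℤ) : Polynomial ℤ :=
  X ^ n - C a * X ^ (n - 1) - C p

/-- `f` is a strictly-Perron polynomial: it is irreducible over `ℚ` and has a real root
`λ > 1` which is a Perron number that is neither Pisot, nor Salem, nor anti-Pisot. -/
def IsStrictlyPerron (f : Polynomial ℤ) : Prop :=
  Irreducible (f.map (algebraMap ℤ ℚ)) ∧
  ∃ lam : ℝ, 1 < lam ∧ Polynomial.aeval lam f = 0 ∧
    (∀ α : ℂ, Polynomial.aeval α f = 0 → α ≠ (lam : ℂ) → ‖α‖ < lam) ∧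
    (∃ α : ℂ, Polynomial.aeval α f = 0 ∧ α ≠ (lam : ℂ) ∧ 1 ≤ ‖α‖) ∧
    Polynomial.aeval (lam⁻¹) f ≠ 0 ∧
    ¬ ((∃! α : ℂ, Polynomial.aeval α f = 0 ∧ ‖α‖ < 1) ∧
       (∃ β : ℂ, Polynomial.aeval β f = 0 ∧ β ≠ (lam : ℂ) ∧ 1 < ‖β‖))

lemma aeval_fnap {R : Type*} [CommRing R] [Algebra ℤ R] (n : ℕ) (a p : ℤ) (x : R) :
    Polynomial.aeval x (fnap n a p) = x ^ n - (a : R) * x ^ (n - 1) - (p : R) := by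
  simp [fnap, algebraMap_int_eq, map_sub]

-- monotonicity past a root
lemma fnap_mono (a : ℤ) (n : ℕ) (p : ℕ) (ha : 1 ≤ a) (hn : 2 ≤ n) (hp0 : 0 < p)
    {s t : ℝ} (hs : 0 ≤ s) (hst : s < t)
    (hroot : s ^ n - (a:ℝ) * s ^ (n-1) - (p:ℝ) = 0) :
    0 < t ^ n - (a:ℝ) * t ^ (n-1) - (p:ℝ) := by
  have hn1 : n - 1 + 1 = n := by omega
  have hs' : s ^ (n-1) * (s - a) = p := by
    have : s ^ (n-1) * s = s ^ n := by rw [← pow_succ, hn1]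
    nlinarith [hroot]
  have hppos : (0:ℝ) < p := by exact_mod_cast hp0
  have hsp : 0 ≤ s ^ (n-1) := pow_nonneg hs _
  have hsa : (a:ℝ) < s := by nlinarith [pow_nonneg hs (n-1)]
  have hspow : s ^ (n-1) < t ^ (n-1) := by
    apply pow_lt_pow_left₀ hst hs
    omega
  have ht' : (p:ℝ) < t ^ (n-1) * (t - a) := by
    have h1 : 0 < s - (a:ℝ) := by linarith
    have : s ^ (n-1) * (s - a) < t ^ (n-1) * (t - a) := by
      apply mul_lt_mul' (le_of_lt hspow) (by linarith) (le_of_lt h1)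
      exact lt_of_le_of_lt hsp hspow
    linarith [hs']
  have : t ^ (n-1) * t = t ^ n := by rw [← pow_succ, hn1]
  nlinarith

lemma fnap_exists_root (a : ℤ) (n : ℕ) (p : ℕ) (ha : 1 ≤ a) (hn : 2 ≤ n) (hp0 : 2 ≤ p)
    (hpa : a + 1 < (p : ℤ)) :
    ∃ lam : ℝ, 1 < lam ∧ lam ^ n - (a:ℝ) * lam ^ (n-1) - (p:ℝ) = 0 := by
  set F : ℝ → ℝ := fun t => t ^ n - (a:ℝ) * t ^ (n-1) - (p:ℝ) with hF
  have hcont : Continuous F := by continuity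
  have hb : (1:ℝ) ≤ (a:ℝ) + (p:ℝ) := by
    have : (1:ℝ) ≤ (a:ℝ) := by exact_mod_cast ha
    have : (0:ℝ) ≤ (p:ℝ) := by positivity
    linarith
  have hF1 : F 1 < 0 := by
    have h1 : (a:ℝ) + 1 < (p:ℝ) := by exact_mod_cast hpa
    have h2 : (1:ℝ) ≤ (a:ℝ) := by exact_mod_cast ha
    simp [hF]
    linarith
  have hFb : 0 ≤ F ((a:ℝ) + p) := by
    have hn1 : n - 1 + 1 = n := by omega
    have hpow : ((a:ℝ) + p) ^ (n-1) * ((a:ℝ) + p) = ((a:ℝ)+p) ^ n := by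
      rw [← pow_succ, hn1]
    have h1 : (1:ℝ) ≤ ((a:ℝ) + p) ^ (n-1) := one_le_pow₀ hb
    have hp' : (0:ℝ) < (p:ℝ) := by exact_mod_cast (by omega : 0 < p)
    have : ((a:ℝ)+p) ^ n - (a:ℝ) * ((a:ℝ)+p)^(n-1) = ((a:ℝ)+p)^(n-1) * (p:ℝ) := by
      nlinarith [hpow]
    simp only [hF]
    nlinarith
  have hsub : Set.Icc (F 1) (F ((a:ℝ)+p)) ⊆ F '' Set.Icc 1 ((a:ℝ)+p) := by
    apply intermediate_value_Icc _ hcont.continuousOn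
    nlinarith
  obtain ⟨lam, hlam, hFlam⟩ := hsub ⟨le_of_lt hF1, hFb⟩
  refine ⟨lam, ?_, hFlam⟩
  rcases lt_or_eq_of_le hlam.1 with h | h
  · exact h
  · exfalso; rw [← h] at hFlam; linarith

-- every complex root has modulus > 1
lemma fnap_root_big (a : ℤ) (n : ℕ) (p : ℕ) (ha : 1 ≤ a) (hn : 2 ≤ n)
    (hpa : a + 1 < (p : ℤ)) {z : ℂ}
    (hz : z ^ n - (a:ℂ) * z ^ (n-1) - (p:ℂ) = 0) : 1 < ‖z‖ := by
  by_contra h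
  push_neg at h
  have ha' : (0:ℝ) ≤ (a:ℝ) := by exact_mod_cast (by linarith : (0:ℤ) ≤ a)
  have h1 : (p:ℝ) = ‖z ^ n - (a:ℂ) * z ^ (n-1)‖ := by
    have : z ^ n - (a:ℂ) * z ^ (n-1) = (p:ℂ) := by linear_combination hz
    rw [this]
    simp
  have h2 : ‖z ^ n - (a:ℂ) * z ^ (n-1)‖ ≤
      ‖z‖ ^ n + (a:ℝ) * ‖z‖ ^ (n-1) := by
    calc ‖z ^ n - (a:ℂ) * z ^ (n-1)‖
        ≤ ‖z ^ n‖ + ‖(a:ℂ) * z ^ (n-1)‖ := by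
          exact (norm_sub_le _ _)
      _ = ‖z‖ ^ n + (a:ℝ) * ‖z‖ ^ (n-1) := by
          have : ‖((a:ℂ))‖ = (a:ℝ) := by
            rw [Complex.norm_intCast, abs_of_nonneg ha']
          rw [norm_mul, norm_pow, norm_pow, this]
  have habs : (0:ℝ) ≤ ‖z‖ := norm_nonneg z
  have h3 : ‖z‖ ^ n ≤ 1 := pow_le_one₀ habs h
  have h4 : ‖z‖ ^ (n-1) ≤ 1 := pow_le_one₀ habs h
  have h5 : (a:ℝ) + 1 < (p:ℝ) := by exact_mod_cast hpa
  nlinarith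

lemma fnap_natDegree (n : ℕ) (a p : ℤ) (hn : 2 ≤ n) : (fnap n a p).natDegree = n := by
  unfold fnap
  rw [natDegree_sub_C, natDegree_sub_eq_left_of_natDegree_lt, natDegree_X_pow]
  rw [natDegree_X_pow]
  calc (C a * X ^ (n-1)).natDegree ≤ (X ^ (n-1) : ℤ[X]).natDegree := natDegree_C_mul_le _ _
    _ = n - 1 := natDegree_X_pow _
    _ < n := by omega

lemma fnap_monic (n : ℕ) (a p : ℤ) (hn : 2 ≤ n) : (fnap n a p).Monic := by
  have hd := fnap_natDegree n a p hn
  unfold Monic leadingCoeff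
  rw [hd]
  unfold fnap
  rw [coeff_sub, coeff_sub, coeff_X_pow, coeff_C_mul, coeff_X_pow, coeff_C]
  have h1 : ¬ (n = n - 1) := by omega
  have h2 : ¬ (n = 0) := by omega
  simp [h1, h2]

lemma one_le_multiset_prod (s : Multiset ℝ) (h : ∀ x ∈ s, 1 ≤ x) : 1 ≤ s.prod := by
  induction s using Multiset.induction with
  | empty => simp
  | cons a s ih =>
    simp only [Multiset.prod_cons]
    have h1 := h a (by simp)
    have h2 := ih (fun x hx => h x (by simp [hx]))
    nlinarith

lemma coeff_zero_big (g : ℤ[X]) (hg : g.Monic) (hd : 1 ≤ g.natDegree)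
    (hroots : ∀ z : ℂ, Polynomial.aeval z g = 0 → 1 < ‖z‖) :
    1 < |(g.coeff 0 : ℝ)| := by
  set G := g.map (algebraMap ℤ ℂ) with hG
  have hGm : G.Monic := hg.map _
  have hGsplits : G.Splits := IsAlgClosed.splits G
  have hGd : G.natDegree = g.natDegree := hg.natDegree_map _
  have hcard : G.roots.card = g.natDegree := by
    rw [← hGd, ← splits_iff_card_roots.mp hGsplits]
  have hmem : ∀ z ∈ G.roots, 1 < ‖z‖ := by
    intro z hz
    apply hroots
    have := isRoot_of_mem_roots hz
    rw [aeval_def, ← eval_map]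
    exact this
  have hne : G.roots ≠ 0 := by
    intro h
    rw [h] at hcard
    simp at hcard
    omega
  obtain ⟨z₀, hz₀⟩ := Multiset.exists_mem_of_ne_zero hne
  have hc0 : G.coeff 0 = (-1) ^ G.natDegree * G.roots.prod :=
    hGsplits.coeff_zero_eq_prod_roots_of_monic hGm
  have habs : ‖G.coeff 0‖ = (G.roots.map (‖·‖)).prod := by
    rw [hc0, norm_mul, norm_pow, norm_neg, norm_one, one_pow, one_mul]
    exact map_multiset_prod (normHom : ℂ →*₀ ℝ) _
  have hprodgt : 1 < (G.roots.map (‖·‖)).prod := by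
    have h1 : ‖z₀‖ * ((G.roots.erase z₀).map (‖·‖)).prod
        = (G.roots.map (‖·‖)).prod := by
      rw [← Multiset.prod_erase (Multiset.mem_map_of_mem (‖·‖) hz₀)]
      congr 1
      rw [← Multiset.map_erase_of_mem _ _ hz₀]
    have h2 : 1 ≤ ((G.roots.erase z₀).map (‖·‖)).prod := by
      apply one_le_multiset_prod
      intro x hx
      obtain ⟨w, hw, rfl⟩ := Multiset.mem_map.mp hx
      exact le_of_lt (hmem w (Multiset.mem_of_mem_erase hw))
    have h3 := hmem z₀ hz₀
    nlinarith
  have hco : ‖((g.coeff 0 : ℂ))‖ = |(g.coeff 0 : ℝ)| := by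
    rw [Complex.norm_intCast]
  have : G.coeff 0 = ((g.coeff 0 : ℤ) : ℂ) := by
    rw [hG, coeff_map]
    simp
  rw [← hco, ← this, habs]
  exact hprodgt

lemma fnap_coeff_zero (n : ℕ) (a p : ℤ) (hn : 2 ≤ n) : (fnap n a p).coeff 0 = -p := by
  unfold fnap
  rw [coeff_sub, coeff_sub, coeff_X_pow, coeff_C_mul, coeff_X_pow, coeff_C]
  have h1 : ¬ (0 = n) := by omega
  have h2 : ¬ (0 = n - 1) := by omega
  simp [Ne.symm (by omega : n ≠ 0), h1, h2]

lemma fnap_irred_int (a : ℤ) (n : ℕ) (p : ℕ) (ha : 1 ≤ a) (hn : 2 ≤ n) (hp : p.Prime)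
    (hpa : a + 1 < (p : ℤ)) : Irreducible (fnap n a (p : ℤ)) := by
  set f := fnap n a (p : ℤ) with hf
  have hfd : f.natDegree = n := fnap_natDegree n a _ hn
  have hfm : f.Monic := fnap_monic n a _ hn
  have hrootf : ∀ z : ℂ, Polynomial.aeval z f = 0 → 1 < ‖z‖ := by
    intro z hz
    rw [aeval_fnap] at hz
    apply fnap_root_big a n p ha hn hpa
    push_cast at hz ⊢
    exact hz
  -- main argument for monic factors
  have key : ∀ g h : ℤ[X], f = g * h → g.Monic → h.Monic → IsUnit g ∨ IsUnit h := by
    intro g h hgh hgm hhm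
    by_cases hg0 : g.natDegree = 0
    · left
      rw [hgm.natDegree_eq_zero.mp hg0]
      exact isUnit_one
    by_cases hh0 : h.natDegree = 0
    · right
      rw [hhm.natDegree_eq_zero.mp hh0]
      exact isUnit_one
    exfalso
    have hgroots : ∀ z : ℂ, Polynomial.aeval z g = 0 → 1 < ‖z‖ := by
      intro z hz
      apply hrootf z
      rw [hgh, map_mul, hz, zero_mul]
    have hhroots : ∀ z : ℂ, Polynomial.aeval z h = 0 → 1 < ‖z‖ := by
      intro z hz
      apply hrootf z
      rw [hgh, map_mul, hz, mul_zero]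
    have hg1 := coeff_zero_big g hgm (by omega) hgroots
    have hh1 := coeff_zero_big h hhm (by omega) hhroots
    have hprod : (g.coeff 0) * (h.coeff 0) = -(p : ℤ) := by
      rw [← fnap_coeff_zero n a (p:ℤ) hn, ← hf, hgh, mul_coeff_zero]
    have hna : 2 ≤ (g.coeff 0).natAbs := by
      by_contra hc
      interval_cases hh : (g.coeff 0).natAbs
      · simp [Int.natAbs_eq_zero.mp hh] at hprod
        have hp2 := hp.two_le
        omega
      · have : |(g.coeff 0 : ℝ)| = 1 := by
          have := Int.natAbs_eq (g.coeff 0)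
          rcases this with h' | h' <;> rw [h', hh] <;> simp
        rw [this] at hg1
        linarith
    have hnb : 2 ≤ (h.coeff 0).natAbs := by
      by_contra hc
      interval_cases hh : (h.coeff 0).natAbs
      · simp [Int.natAbs_eq_zero.mp hh] at hprod
        have hp2 := hp.two_le
        omega
      · have : |(h.coeff 0 : ℝ)| = 1 := by
          have := Int.natAbs_eq (h.coeff 0)
          rcases this with h' | h' <;> rw [h', hh] <;> simp
        rw [this] at hh1
        linarith
    have hmul : (g.coeff 0).natAbs * (h.coeff 0).natAbs = p := by
      have := congrArg Int.natAbs hprod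
      rwa [Int.natAbs_mul, Int.natAbs_neg, Int.natAbs_natCast] at this
    have hdvd : (g.coeff 0).natAbs ∣ p := ⟨(h.coeff 0).natAbs, hmul.symm⟩
    rcases hp.eq_one_or_self_of_dvd _ hdvd with h' | h'
    · omega
    · rw [h'] at hmul
      nlinarith [hp.two_le]
  constructor
  · apply not_isUnit_of_natDegree_pos
    omega
  · intro g h hgh
    have hlc : g.leadingCoeff * h.leadingCoeff = 1 := by
      rw [← leadingCoeff_mul, ← hgh, hfm.leadingCoeff]
    have hglc := Int.isUnit_iff.mp (IsUnit.of_mul_eq_one _ hlc)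
    rcases hglc with h1 | h1
    · have h2 : h.leadingCoeff = 1 := by
        rw [h1, one_mul] at hlc
        exact hlc
      exact key g h hgh h1 h2
    · have h2 : h.leadingCoeff = -1 := by
        rw [h1] at hlc
        linarith
      have : f = (-g) * (-h) := by rw [neg_mul_neg]; exact hgh
      have := key (-g) (-h) this (by simp [Monic, leadingCoeff_neg, h1])
        (by simp [Monic, leadingCoeff_neg, h2])
      rcases this with h3 | h3
      · exact Or.inl ((IsUnit.neg_iff _).mp h3)
      · exact Or.inr (by exact (IsUnit.neg_iff _).mp h3)

-- Perron bound
lemma fnap_root_lt (a : ℤ) (n : ℕ) (p : ℕ) (ha : 1 ≤ a) (hn : 2 ≤ n) (hp0 : 0 < p)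
    {lam : ℝ} (hlam1 : 1 < lam) (hlam : lam ^ n - (a:ℝ) * lam ^ (n-1) - (p:ℝ) = 0)
    {z : ℂ} (hz : z ^ n - (a:ℂ) * z ^ (n-1) - (p:ℂ) = 0) (hne : z ≠ (lam:ℂ)) :
    ‖z‖ < lam := by
  have ha' : (0:ℝ) < (a:ℝ) := by exact_mod_cast (by linarith : (0:ℤ) < a)
  have habsa : ‖((a:ℂ))‖ = (a:ℝ) := by
    rw [Complex.norm_intCast, abs_of_nonneg (le_of_lt ha')]
  have habsp : ‖((p:ℂ))‖ = (p:ℝ) := by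
    rw [Complex.norm_natCast]
  have hzn : z ^ n = (a:ℂ) * z ^ (n-1) + (p:ℂ) := by linear_combination hz
  -- |z| ≤ lam
  have hle : ‖z‖ ≤ lam := by
    by_contra h
    push_neg at h
    have hFz : ‖z‖ ^ n ≤ (a:ℝ) * ‖z‖ ^ (n-1) + (p:ℝ) := by
      calc ‖z‖ ^ n = ‖z ^ n‖ := by rw [norm_pow]
        _ = ‖(a:ℂ) * z ^ (n-1) + (p:ℂ)‖ := by rw [hzn]
        _ ≤ ‖(a:ℂ) * z ^ (n-1)‖ + ‖(p:ℂ)‖ := norm_add_le _ _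
        _ = (a:ℝ) * ‖z‖ ^ (n-1) + (p:ℝ) := by rw [norm_mul, norm_pow, habsa, habsp]
    have := fnap_mono a n p ha hn hp0 (by linarith : (0:ℝ) ≤ lam) h hlam
    linarith
  rcases lt_or_eq_of_le hle with h | heq
  · exact h
  -- equality case: z = lam, contradiction
  exfalso
  apply hne
  have hpne : ((p:ℂ)) ≠ 0 := by
    simp only [ne_eq, Nat.cast_eq_zero]
    omega
  have heqabs : ‖(a:ℂ) * z ^ (n-1) + (p:ℂ)‖ =
      ‖(a:ℂ) * z ^ (n-1)‖ + ‖(p:ℂ)‖ := by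
    rw [← hzn, norm_pow, heq, norm_mul, norm_pow, habsa, habsp, heq]
    linarith
  have hray : SameRay ℝ ((a:ℂ) * z ^ (n-1)) ((p:ℂ)) := by
    rw [sameRay_iff_norm_add]
    exact heqabs
  -- from SameRay: ‖x‖ • y = ‖y‖ • x
  have hsm := hray.norm_smul_eq
  -- ‖x‖ = a * lam^(n-1), ‖y‖ = p
  have hnx : ‖(a:ℂ) * z ^ (n-1)‖ = (a:ℝ) * lam ^ (n-1) := by
    rw [norm_mul, norm_pow, habsa, heq]
  have hny : ‖((p:ℕ):ℂ)‖ = (p:ℝ) := by rw [habsp]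
  rw [hnx, hny] at hsm
  -- hsm : (a*lam^(n-1)) • (p:ℂ) = p • ((a:ℂ) * z^(n-1))
  have hz1 : (a:ℂ) * z ^ (n-1) = ((a:ℝ) * lam ^ (n-1) : ℝ) := by
    have hp' : (0:ℝ) < (p:ℝ) := by exact_mod_cast hp0
    have : ((p:ℝ)) • ((a:ℂ) * z ^ (n-1)) = ((p:ℝ)) • (((a:ℝ) * lam ^ (n-1) : ℝ) : ℂ) := by
      rw [← hsm]
      push_cast
      ring_nf
      rw [Complex.real_smul, Complex.real_smul]
      push_cast
      ring
    exact smul_right_injective ℂ (ne_of_gt hp') this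
  -- so z^(n-1) = lam^(n-1) as complex
  have hzn1 : z ^ (n-1) = ((lam ^ (n-1) : ℝ) : ℂ) := by
    have hane : a ≠ 0 := by omega
    push_cast at hz1 ⊢
    have ha0 : (a:ℂ) ≠ 0 := by exact_mod_cast hane
    exact mul_left_cancel₀ ha0 hz1
  have hlpow : (0:ℝ) < lam ^ (n-1) := pow_pos (by linarith) _
  have hn1 : n - 1 + 1 = n := by omega
  have hzz : z ^ (n-1) * z = z ^ n := by rw [← pow_succ, hn1]
  have hznval : z ^ n = ((lam ^ n : ℝ) : ℂ) := by
    rw [hzn, hzn1]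
    have : (a:ℝ) * lam ^ (n-1) + (p:ℝ) = lam ^ n := by linarith
    push_cast [← this]
    ring
  have hpowne : (((lam ^ (n-1):ℝ)):ℂ) ≠ 0 := by
    simp only [ne_eq, Complex.ofReal_eq_zero]
    linarith
  have l1 : ((lam ^ (n-1):ℝ):ℂ) * z = ((lam ^ n : ℝ):ℂ) := by rw [← hzn1, hzz, hznval]
  have l2 : ((lam ^ (n-1):ℝ):ℂ) * (lam:ℂ) = ((lam ^ n : ℝ):ℂ) := by
    push_cast
    rw [← pow_succ, hn1]
  exact mul_left_cancel₀ hpowne (by rw [l1, l2])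

theorem stmt_2 (a : ℤ) (n : ℕ) (p : ℕ) (ha : 1 ≤ a) (hn : 2 ≤ n) (hp : p.Prime)
    (hpa : a + 1 < (p : ℤ)) :
    IsStrictlyPerron (fnap n a (p : ℤ)) := by
  have hp2 := hp.two_le
  constructor
  · exact ((fnap_monic n a _ hn).irreducible_iff_irreducible_map_fraction_map).mp
      (fnap_irred_int a n p ha hn hp hpa)
  obtain ⟨lam, hlam1, hlam⟩ := fnap_exists_root a n p ha hn hp2 hpa
  have hrootC : ∀ z : ℂ, Polynomial.aeval z (fnap n a (p:ℤ)) = 0 →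
      z ^ n - (a:ℂ) * z ^ (n-1) - (p:ℂ) = 0 := by
    intro z hz
    rw [aeval_fnap] at hz
    push_cast at hz
    exact hz
  have hbig : ∀ z : ℂ, Polynomial.aeval z (fnap n a (p:ℤ)) = 0 → 1 < ‖z‖ :=
    fun z hz => fnap_root_big a n p ha hn hpa (hrootC z hz)
  refine ⟨lam, hlam1, ?_, ?_, ?_, ?_, ?_⟩
  · rw [aeval_fnap]
    push_cast
    exact hlam
  · intro α hα hne
    exact fnap_root_lt a n p ha hn (by omega) hlam1 hlam (hrootC α hα) hne
  · -- second root exists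
    set F := (fnap n a (p:ℤ)).map (algebraMap ℤ ℂ) with hF
    have hsep : F.Separable := by
      have h1 : Irreducible ((fnap n a (p:ℤ)).map (algebraMap ℤ ℚ)) :=
        ((fnap_monic n a _ hn).irreducible_iff_irreducible_map_fraction_map).mp
          (fnap_irred_int a n p ha hn hp hpa)
      have h2 := h1.separable
      have h3 := h2.map (f := algebraMap ℚ ℂ)
      rwa [map_map, ← IsScalarTower.algebraMap_eq] at h3
    have hFm : F.Monic := (fnap_monic n a _ hn).map _
    have hFne : F ≠ 0 := hFm.ne_zero
    have hFd : F.natDegree = n := by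
      rw [hF, (fnap_monic n a _ hn).natDegree_map, fnap_natDegree n a _ hn]
    have hcard : F.roots.card = n := by
      rw [← hFd, ← splits_iff_card_roots.mp (IsAlgClosed.splits F)]
    have hnodup : F.roots.Nodup := nodup_roots hsep
    have haev : ∀ z : ℂ, z ∈ F.roots ↔ Polynomial.aeval z (fnap n a (p:ℤ)) = 0 := by
      intro z
      rw [mem_roots hFne, IsRoot, hF, eval_map, ← aeval_def]
    have hlammem : (lam : ℂ) ∈ F.roots := by
      rw [haev]
      rw [aeval_fnap]
      push_cast
      exact_mod_cast congrArg (fun t : ℝ => (t : ℂ)) hlam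
    have hcard' : 0 < (F.roots.erase (lam:ℂ)).card := by
      rw [Multiset.card_erase_of_mem hlammem, hcard]
      show 0 < n - 1
      omega
    obtain ⟨α, hαmem⟩ := Multiset.card_pos_iff_exists_mem.mp hcard'
    have hαne : α ≠ (lam:ℂ) ∧ α ∈ F.roots := (hnodup.mem_erase_iff).mp hαmem
    refine ⟨α, (haev α).mp hαne.2, hαne.1, le_of_lt (hbig α ((haev α).mp hαne.2))⟩
  · -- lam⁻¹ is not a root
    intro hinv
    have h1 : Polynomial.aeval ((lam⁻¹ : ℝ) : ℂ) (fnap n a (p:ℤ)) = 0 := by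
      rw [aeval_fnap] at hinv ⊢
      push_cast at hinv ⊢
      exact_mod_cast congrArg (fun t : ℝ => (t : ℂ)) hinv
    have h2 := hbig _ h1
    rw [Complex.norm_real, Real.norm_eq_abs] at h2
    have h3 : lam⁻¹ < 1 := by
      rw [inv_lt_one_iff₀]
      right; exact hlam1
    have h4 : 0 < lam⁻¹ := by positivity
    rw [abs_of_pos h4] at h2
    linarith
  · -- not anti-Pisot
    rintro ⟨⟨α, ⟨hαr, hαlt⟩, -⟩, -⟩
    have := hbig α hαr
    linarith
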